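/- Let Ψ be a positive definite (n+v)×(n+v) matrix partitioned into blocks Ψ₁₁ (n×n), Ψ₁₂ = Ψ₂₁^⊤ (n×v), Ψ₂₂ (v×v), let ξ = (ξ₁, ξ₂) ∈ ℝ^{n+v} and λ̄ ∈ ℝ^{n+v}, write (υ^{(1)}, υ^{(2)}) = Ψ^{-1/2} λ̄ with υ^{(1)} ∈ ℝ^n, υ^{(2)} ∈ ℝ^v, and set Ψ₂₂.₁ = Ψ₂₂ − Ψ₂₁ Ψ₁₁^{-1} Ψ₁₂ and υ̃ = (υ^{(1)} + Ψ₁₁^{-1} Ψ₁₂ υ^{(2)}) / √(1 + υ^{(2)⊤} Ψ₂₂.₁ υ^{(2)}). Then integrating the (n+v)-dimensional skew-normal density over the last block gives an n-dimensional skew-normal density: for every y₁ ∈ ℝ^n, ∫_{ℝ^v} 2 φ_{n+v}((y₁, y₂); ξ, Ψ) Φ(λ̄^⊤ Ψ^{-1/2}((y₁, y₂) − ξ)) dy₂ = 2 φ_n(y₁; ξ₁, Ψ₁₁) Φ(υ̃^⊤(y₁ − ξ₁)). -/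

import Mathlib

open MeasureTheory Matrix Real

/-- Multivariate normal density `φ_k(y; μ, S)`. -/
noncomputable def mvnPdf {k : Type*} [Fintype k] [DecidableEq k]
    (μ : k → ℝ) (S : Matrix k k ℝ) (y : k → ℝ) : ℝ :=
  (2 * Real.pi) ^ (-(Fintype.card k : ℝ) / 2) * S.det ^ (-(1 : ℝ) / 2) *
    Real.exp (-((y - μ) ⬝ᵥ (S⁻¹ *ᵥ (y - μ))) / 2)

/-- Standard univariate normal cumulative distribution function `Φ`. -/
noncomputable def stdCDF (x : ℝ) : ℝ :=
  ∫ t in Set.Iic x, (Real.sqrt (2 * Real.pi))⁻¹ * Real.exp (-t ^ 2 / 2)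

/-- Inverse of the positive definite square root, `S^{-1/2}`. -/
noncomputable def invSqrt {k : Type*} [Fintype k] [DecidableEq k]
    {S : Matrix k k ℝ} (hS : S.PosDef) : Matrix k k ℝ :=
  ((hS.posSemidef.1.eigenvectorUnitary : Matrix k k ℝ) *
    Matrix.diagonal (Real.sqrt ∘ hS.posSemidef.1.eigenvalues) *
    star (hS.posSemidef.1.eigenvectorUnitary : Matrix k k ℝ))⁻¹

noncomputable def sqrtPD {k : Type*} [Fintype k] [DecidableEq k]
    {S : Matrix k k ℝ} (hS : S.PosDef) : Matrix k k ℝ :=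
  (hS.posSemidef.1.eigenvectorUnitary : Matrix k k ℝ) *
    Matrix.diagonal (Real.sqrt ∘ hS.posSemidef.1.eigenvalues) *
    star (hS.posSemidef.1.eigenvectorUnitary : Matrix k k ℝ)

lemma sqrtPD_mul_self {k : Type*} [Fintype k] [DecidableEq k]
    {S : Matrix k k ℝ} (hS : S.PosDef) : sqrtPD hS * sqrtPD hS = S := by
  have hU : star (hS.posSemidef.1.eigenvectorUnitary : Matrix k k ℝ) *
      (hS.posSemidef.1.eigenvectorUnitary : Matrix k k ℝ) = 1 := Unitary.coe_star_mul_self _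
  have hspec := hS.posSemidef.1.spectral_theorem
  have hD : Matrix.diagonal (Real.sqrt ∘ hS.posSemidef.1.eigenvalues) *
      Matrix.diagonal (Real.sqrt ∘ hS.posSemidef.1.eigenvalues) =
      Matrix.diagonal (RCLike.ofReal ∘ hS.posSemidef.1.eigenvalues) := by
    rw [Matrix.diagonal_mul_diagonal]
    congr 1
    funext i
    simp [Real.mul_self_sqrt (hS.posSemidef.eigenvalues_nonneg i)]
  unfold sqrtPD
  rw [show ∀ U D : Matrix k k ℝ, U * D * star U * (U * D * star U) =
      U * (D * (star U * U) * D) * star U from fun U D => by simp only [Matrix.mul_assoc],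
    hU, Matrix.mul_one, hD]
  exact hspec.symm

lemma sqrtPD_isHermitian {k : Type*} [Fintype k] [DecidableEq k]
    {S : Matrix k k ℝ} (hS : S.PosDef) : (sqrtPD hS).IsHermitian := by
  unfold sqrtPD Matrix.IsHermitian
  rw [Matrix.conjTranspose_mul, Matrix.conjTranspose_mul, Matrix.diagonal_conjTranspose]
  simp only [← Matrix.star_eq_conjTranspose, star_star, star_trivial, Matrix.mul_assoc]

open Set

noncomputable def stdPdf (t : ℝ) : ℝ := (Real.sqrt (2 * Real.pi))⁻¹ * Real.exp (-t ^ 2 / 2)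

lemma stdPdf_nonneg (t : ℝ) : 0 ≤ stdPdf t := by
  unfold stdPdf; positivity

lemma continuous_stdPdf : Continuous stdPdf := by
  unfold stdPdf; fun_prop

lemma integrable_stdPdf : Integrable stdPdf := by
  have : Integrable (fun t : ℝ => Real.exp (-(1/2) * t ^ 2)) := integrable_exp_neg_mul_sq (by norm_num)
  have h2 := this.const_mul ((Real.sqrt (2 * Real.pi))⁻¹)
  refine h2.congr (Filter.Eventually.of_forall fun t => ?_)
  unfold stdPdf; ring_nf

lemma integral_stdPdf : ∫ t, stdPdf t = 1 := by
  unfold stdPdf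
  rw [MeasureTheory.integral_const_mul]
  have : (fun t : ℝ => Real.exp (-t ^ 2 / 2)) = fun t : ℝ => Real.exp (-(1/2) * t ^ 2) := by
    funext t; ring_nf
  rw [this, integral_gaussian]
  rw [show Real.pi / (1/2) = 2 * Real.pi by ring]
  rw [inv_mul_cancel₀]
  positivity

lemma stdCDF_eq (x : ℝ) : stdCDF x = ∫ t in Set.Iic x, stdPdf t := rfl

lemma stdCDF_nonneg (x : ℝ) : 0 ≤ stdCDF x := by
  rw [stdCDF_eq]
  exact MeasureTheory.setIntegral_nonneg measurableSet_Iic fun t _ => stdPdf_nonneg t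

lemma monotone_stdCDF : Monotone stdCDF := by
  intro x y hxy
  rw [stdCDF_eq, stdCDF_eq]
  refine setIntegral_mono_set integrable_stdPdf.integrableOn
    (Filter.Eventually.of_forall fun t => stdPdf_nonneg t)
    (Filter.Eventually.of_forall fun t ht => le_trans ht hxy)

lemma measurable_stdCDF : Measurable stdCDF := monotone_stdCDF.measurable

lemma stdCDF_le_one (x : ℝ) : stdCDF x ≤ 1 := by
  rw [stdCDF_eq, ← integral_stdPdf]
  refine setIntegral_le_integral integrable_stdPdf
    (Filter.Eventually.of_forall fun t => stdPdf_nonneg t)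

lemma setIntegral_Iic_add (f : ℝ → ℝ) (a c : ℝ) :
    ∫ u in Set.Iic a, f (u + c) = ∫ s in Set.Iic (a + c), f s := by
  have h1 : MeasurePreserving (fun u : ℝ => u + c) volume volume :=
    measurePreserving_add_right volume c
  have h2 : MeasurableEmbedding (fun u : ℝ => u + c) :=
    (Homeomorph.addRight c).measurableEmbedding
  have := h1.setIntegral_preimage_emb h2 f (Set.Iic (a + c))
  rw [← this]
  congr 1
  rw [preimage_add_const_Iic]
  norm_num

lemma setIntegral_Iic_mul (f : ℝ → ℝ) (a : ℝ) {c : ℝ} (hc : 0 < c) :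
    ∫ u in Set.Iic a, f (c * u) = c⁻¹ * ∫ s in Set.Iic (c * a), f s := by
  have h2 : MeasurableEmbedding (fun u : ℝ => c * u) :=
    (Homeomorph.mulLeft₀ c hc.ne').measurableEmbedding
  have hmap : Measure.map (fun u : ℝ => c * u) volume = ENNReal.ofReal |c⁻¹| • volume :=
    Real.map_volume_mul_left hc.ne'
  have := h2.setIntegral_map f (Set.Iic (c * a)) (μ := volume)
  rw [hmap] at this
  rw [Measure.restrict_smul, integral_smul_measure] at this
  rw [preimage_const_mul_Iic₀ _ hc, mul_div_cancel_left₀ _ hc.ne'] at this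
  rw [← this, ENNReal.toReal_ofReal (abs_nonneg _), abs_of_pos (by positivity), smul_eq_mul]

lemma inner_gauss (b u : ℝ) :
    ∫ t, stdPdf t * stdPdf (u + b * t) =
      (Real.sqrt (1 + b ^ 2))⁻¹ * stdPdf ((Real.sqrt (1 + b ^ 2))⁻¹ * u) := by
  set q : ℝ := 1 + b ^ 2 with hq
  have hqpos : 0 < q := by positivity
  set s : ℝ := Real.sqrt q with hs
  have hspos : 0 < s := Real.sqrt_pos.mpr hqpos
  have hs2 : s ^ 2 = q := Real.sq_sqrt hqpos.le
  set k : ℝ := q / 2 with hk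
  have hkpos : 0 < k := by positivity
  set c₀ : ℝ := u * b / q with hc₀
  have h2pi : (0:ℝ) < 2 * Real.pi := by positivity
  have hsq2pi : Real.sqrt (2 * Real.pi) ^ 2 = 2 * Real.pi := Real.sq_sqrt h2pi.le
  have hsqpos : 0 < Real.sqrt (2 * Real.pi) := Real.sqrt_pos.mpr h2pi
  have hpt : ∀ t : ℝ, stdPdf t * stdPdf (u + b * t) =
      ((Real.sqrt (2 * Real.pi))⁻¹ * (Real.sqrt (2 * Real.pi))⁻¹ *
        Real.exp (-(u ^ 2) / (2 * q))) * Real.exp (-k * (t + c₀) ^ 2) := by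
    intro t
    unfold stdPdf
    have hqne : (1 + b ^ 2 : ℝ) ≠ 0 := by positivity
    have hx : -t ^ 2 / 2 + -(u + b * t) ^ 2 / 2 = -(u ^ 2) / (2 * q) + -k * (t + c₀) ^ 2 := by
      simp only [hc₀, hk, hq]
      field_simp
      ring
    rw [mul_mul_mul_comm, ← Real.exp_add, hx, Real.exp_add]
    ring
  rw [MeasureTheory.integral_congr_ae (Filter.Eventually.of_forall hpt)]
  rw [MeasureTheory.integral_const_mul]
  have hshift : ∫ t : ℝ, Real.exp (-k * (t + c₀) ^ 2) = ∫ t : ℝ, Real.exp (-k * t ^ 2) :=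
    integral_add_right_eq_self (fun t : ℝ => Real.exp (-k * t ^ 2)) c₀
  rw [hshift, integral_gaussian]
  have hπk : Real.sqrt (Real.pi / k) = Real.sqrt (2 * Real.pi) / s := by
    rw [show Real.pi / k = (2 * Real.pi) / q by rw [hk, div_div_eq_mul_div]; ring]
    rw [Real.sqrt_div h2pi.le, hs]
  rw [hπk]
  unfold stdPdf
  have hexp : Real.exp (-(s⁻¹ * u) ^ 2 / 2) = Real.exp (-(u ^ 2) / (2 * q)) := by
    congr 1
    rw [mul_pow, inv_pow, hs2]
    field_simp
  rw [hexp]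
  field_simp

lemma lemmaA (a b : ℝ) :
    ∫ t, stdPdf t * stdCDF (a + b * t) = stdCDF (a / Real.sqrt (1 + b ^ 2)) := by
  set q : ℝ := 1 + b ^ 2 with hq
  have hqpos : 0 < q := by positivity
  set s : ℝ := Real.sqrt q with hs
  have hspos : 0 < s := Real.sqrt_pos.mpr hqpos
  -- rewrite stdCDF as an integral over Iic a
  have h1 : ∀ t : ℝ, stdCDF (a + b * t) = ∫ u in Set.Iic a, stdPdf (u + b * t) := by
    intro t
    rw [setIntegral_Iic_add stdPdf a (b * t), stdCDF_eq]
  have h2 : ∀ t : ℝ, stdPdf t * stdCDF (a + b * t)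
      = ∫ u in Set.Iic a, stdPdf t * stdPdf (u + b * t) := by
    intro t
    rw [h1 t, MeasureTheory.integral_const_mul]
  rw [MeasureTheory.integral_congr_ae (Filter.Eventually.of_forall h2)]
  -- Fubini
  have hcont : Continuous (Function.uncurry fun t u : ℝ => stdPdf t * stdPdf (u + b * t)) := by
    apply Continuous.mul
    · exact continuous_stdPdf.comp continuous_fst
    · exact continuous_stdPdf.comp (by fun_prop)
  have hint : Integrable (Function.uncurry fun t u : ℝ => stdPdf t * stdPdf (u + b * t))
      (volume.prod (volume.restrict (Set.Iic a))) := by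
    refine (MeasureTheory.integrable_prod_iff hcont.aestronglyMeasurable).mpr ⟨?_, ?_⟩
    · refine Filter.Eventually.of_forall fun t => ?_
      exact ((integrable_stdPdf.comp_add_right (b * t)).const_mul (stdPdf t)).restrict
    · have heq : ∀ t : ℝ, (∫ u in Set.Iic a, ‖stdPdf t * stdPdf (u + b * t)‖)
          = stdCDF (a + b * t) * stdPdf t := by
        intro t
        calc ∫ u in Set.Iic a, ‖stdPdf t * stdPdf (u + b * t)‖
            = ∫ u in Set.Iic a, stdPdf t * stdPdf (u + b * t) :=
              MeasureTheory.integral_congr_ae (Filter.Eventually.of_forall fun u => by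
                simp only []
                rw [Real.norm_eq_abs, abs_of_nonneg
                  (mul_nonneg (stdPdf_nonneg t) (stdPdf_nonneg _))])
          _ = stdPdf t * ∫ u in Set.Iic a, stdPdf (u + b * t) :=
              MeasureTheory.integral_const_mul _ _
          _ = stdCDF (a + b * t) * stdPdf t := by rw [← h1 t]; ring
      refine (MeasureTheory.Integrable.bdd_mul integrable_stdPdf
        ((measurable_stdCDF.comp (by fun_prop)).aestronglyMeasurable) (c := 1)
          (Filter.Eventually.of_forall fun t => ?_)).congr
        (Filter.Eventually.of_forall fun t => (heq t).symm)
      simp only [Function.comp_apply, Real.norm_eq_abs]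
      rw [abs_of_nonneg (stdCDF_nonneg _)]
      exact stdCDF_le_one _
  rw [MeasureTheory.integral_integral_swap hint]
  have h3 : ∀ u : ℝ, (∫ t : ℝ, stdPdf t * stdPdf (u + b * t)) = s⁻¹ * stdPdf (s⁻¹ * u) :=
    fun u => inner_gauss b u
  rw [MeasureTheory.integral_congr_ae (Filter.Eventually.of_forall fun u => h3 u)]
  rw [MeasureTheory.integral_const_mul]
  rw [setIntegral_Iic_mul stdPdf a (inv_pos.mpr hspos)]
  rw [inv_inv, inv_mul_cancel_left₀ hspos.ne', stdCDF_eq, inv_mul_eq_div]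

lemma measurable_dot {k : ℕ} (w : Fin k → ℝ) : Measurable fun z : Fin k → ℝ => w ⬝ᵥ z := by
  simp only [dotProduct]
  exact Finset.measurable_sum _ fun i _ => measurable_const.mul (measurable_pi_apply i)

lemma lemmaP (k : ℕ) : ∀ (a : ℝ) (w : Fin k → ℝ),
    ∫ z : Fin k → ℝ, (∏ i, stdPdf (z i)) * stdCDF (a + w ⬝ᵥ z)
      = stdCDF (a / Real.sqrt (1 + w ⬝ᵥ w)) := by
  induction k with
  | zero =>
    intro a w
    have h0 : ∀ z : Fin 0 → ℝ, (∏ i, stdPdf (z i)) * stdCDF (a + w ⬝ᵥ z) = stdCDF a := by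
      intro z
      simp [dotProduct]
    rw [MeasureTheory.integral_congr_ae (Filter.Eventually.of_forall h0),
      MeasureTheory.integral_const, smul_eq_mul]
    have h1 : (volume : Measure (Fin 0 → ℝ)) Set.univ = 1 := by
      rw [MeasureTheory.volume_pi, ← Set.pi_univ Set.univ, MeasureTheory.Measure.pi_pi]
      simp
    rw [measureReal_def, h1]
    have h2 : w ⬝ᵥ w = 0 := by simp [dotProduct]
    rw [h2]
    norm_num
  | succ k ih =>
    intro a w
    set w' : Fin k → ℝ := w ∘ Fin.succ with hw'
    set F : (Fin (k+1) → ℝ) → ℝ :=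
      fun z => (∏ i, stdPdf (z i)) * stdCDF (a + w ⬝ᵥ z) with hF
    have hcomp := ((MeasureTheory.volume_preserving_piFinSuccAbove
        (fun _ : Fin (k+1) => ℝ) 0).symm).integral_comp
        (MeasurableEquiv.measurableEmbedding _) F
    rw [← hcomp]
    have hpt : ∀ p : ℝ × (Fin k → ℝ),
        F ((MeasurableEquiv.piFinSuccAbove (fun _ : Fin (k+1) => ℝ) 0).symm p)
          = stdPdf p.1 * ((∏ i, stdPdf (p.2 i)) * stdCDF (a + w 0 * p.1 + w' ⬝ᵥ p.2)) := by
    -- compute on insertNth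
      intro p
      simp only [hF, MeasurableEquiv.piFinSuccAbove_symm_apply, Fin.insertNthEquiv,
        Fin.insertNth_zero, Equiv.coe_fn_mk]
      rw [Fin.prod_univ_succ]
      simp only [Fin.cons_zero, Fin.cons_succ]
      rw [mul_assoc]
      congr 2
      simp only [dotProduct, Fin.sum_univ_succ, Fin.cons_zero, Fin.cons_succ]
      rw [add_assoc]
      rfl
    rw [MeasureTheory.integral_congr_ae (Filter.Eventually.of_forall hpt)]
    -- integrability on the product space
    have hmeas : Measurable fun p : ℝ × (Fin k → ℝ) => stdCDF (a + w 0 * p.1 + w' ⬝ᵥ p.2) := by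
      refine measurable_stdCDF.comp ?_
      exact (((measurable_fst.const_mul (w 0)).const_add a).add
        ((measurable_dot w').comp measurable_snd))
    have hbase : Integrable (fun p : ℝ × (Fin k → ℝ) => stdPdf p.1 * ∏ i, stdPdf (p.2 i))
        (volume.prod volume) :=
      MeasureTheory.Integrable.mul_prod integrable_stdPdf
        (MeasureTheory.Integrable.fin_nat_prod fun _ => integrable_stdPdf)
    have hint : Integrable (fun p : ℝ × (Fin k → ℝ) =>
        stdPdf p.1 * ((∏ i, stdPdf (p.2 i)) * stdCDF (a + w 0 * p.1 + w' ⬝ᵥ p.2)))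
        (volume.prod volume) := by
      refine (MeasureTheory.Integrable.bdd_mul hbase hmeas.aestronglyMeasurable
        (c := 1) (Filter.Eventually.of_forall fun p => ?_)).congr (Filter.Eventually.of_forall fun p => by ring_nf)
      rw [Real.norm_eq_abs, abs_of_nonneg (stdCDF_nonneg _)]
      exact stdCDF_le_one _
    rw [show (volume : Measure (ℝ × (Fin k → ℝ))) = (volume : Measure ℝ).prod volume from rfl,
      MeasureTheory.integral_prod _ hint]
    -- inner integral via ih
    have hin : ∀ t : ℝ, (∫ y : Fin k → ℝ,
        stdPdf t * ((∏ i, stdPdf (y i)) * stdCDF (a + w 0 * t + w' ⬝ᵥ y)))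
        = stdPdf t * stdCDF ((a + w 0 * t) / Real.sqrt (1 + w' ⬝ᵥ w')) := by
      intro t
      rw [MeasureTheory.integral_const_mul, ih (a + w 0 * t) w']
    rw [MeasureTheory.integral_congr_ae (Filter.Eventually.of_forall hin)]
    set Q : ℝ := Real.sqrt (1 + w' ⬝ᵥ w') with hQ
    have hw'w' : 0 ≤ w' ⬝ᵥ w' := by
      simp only [dotProduct, ← pow_two]
      positivity
    have hQpos : 0 < Q := Real.sqrt_pos.mpr (by linarith)
    have hQQ : Q ^ 2 = 1 + w' ⬝ᵥ w' := Real.sq_sqrt (by linarith)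
    have harg : ∀ t : ℝ, (a + w 0 * t) / Q = a / Q + (w 0 / Q) * t := by
      intro t
      field_simp
    simp_rw [harg]
    rw [lemmaA (a / Q) (w 0 / Q)]
    congr 1
    have hww : w ⬝ᵥ w = w 0 * w 0 + w' ⬝ᵥ w' := by
      simp only [dotProduct, Fin.sum_univ_succ]
      rfl
    have hkey : Q * Real.sqrt (1 + (w 0 / Q) ^ 2) = Real.sqrt (1 + w ⬝ᵥ w) := by
      rw [← Real.sqrt_sq hQpos.le, ← Real.sqrt_mul (sq_nonneg Q)]
      congr 1
      rw [hww]
      field_simp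
      rw [hQQ]
      linear_combination (-(w 0) ^ 2) * Real.sq_sqrt (show (0:ℝ) ≤ 1 + w' ⬝ᵥ w' by linarith)
    rw [div_div, hkey]

lemma measurable_quadform {k : Type*} [Fintype k] (S : Matrix k k ℝ) (m : k → ℝ) :
    Measurable fun y : k → ℝ => (y - m) ⬝ᵥ (S *ᵥ (y - m)) := by
  simp only [dotProduct, Matrix.mulVec, Pi.sub_apply]
  refine Finset.measurable_sum _ fun i _ => Measurable.mul ?_ ?_
  · exact (measurable_pi_apply i).sub measurable_const
  · exact Finset.measurable_sum _ fun j _ =>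
      by fun_prop

lemma measurable_mvnPdf {k : Type*} [Fintype k] [DecidableEq k]
    (m : k → ℝ) (S : Matrix k k ℝ) : Measurable (mvnPdf m S) := by
  unfold mvnPdf
  exact (((measurable_quadform S⁻¹ m).neg.div_const 2).exp).const_mul _

lemma integral_comp_mulVec {v : ℕ} {R : Matrix (Fin v) (Fin v) ℝ} (hdet : R.det ≠ 0)
    {G : (Fin v → ℝ) → ℝ} (hG : Measurable G) :
    ∫ x, G x = |R.det| * ∫ z, G (R *ᵥ z) := by
  have hmap := Real.map_matrix_volume_pi_eq_smul_volume_pi (M := R) hdet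
  have hlin : Measurable (Matrix.toLin' R) :=
    (Matrix.toLin' R).continuous_of_finiteDimensional.measurable
  have h1 : ∫ z, G (Matrix.toLin' R z) = ∫ x, G x ∂(Measure.map (Matrix.toLin' R) volume) :=
    (MeasureTheory.integral_map hlin.aemeasurable hG.aestronglyMeasurable).symm
  have h2 : ∀ z, Matrix.toLin' R z = R *ᵥ z := fun z => Matrix.toLin'_apply R z
  simp only [h2] at h1
  rw [hmap, MeasureTheory.integral_smul_measure, ENNReal.toReal_ofReal (abs_nonneg _),
    abs_inv, smul_eq_mul] at h1
  rw [h1, ← mul_assoc, mul_inv_cancel₀ (abs_ne_zero.mpr hdet), one_mul]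

lemma lemmaB {v : ℕ} {S : Matrix (Fin v) (Fin v) ℝ} (hS : S.PosDef) (m u : Fin v → ℝ) (α : ℝ) :
    ∫ y : Fin v → ℝ, mvnPdf m S y * stdCDF (α + u ⬝ᵥ y)
      = stdCDF ((α + u ⬝ᵥ m) / Real.sqrt (1 + u ⬝ᵥ (S *ᵥ u))) := by
  set R : Matrix (Fin v) (Fin v) ℝ := sqrtPD hS with hR
  have hRR : R * R = S := sqrtPD_mul_self hS
  have hRherm : R.IsHermitian := sqrtPD_isHermitian hS
  have hRsym : Rᵀ = R := by
    rw [← Matrix.conjTranspose_eq_transpose_of_trivial]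
    exact hRherm
  have hdetS : 0 < S.det := hS.det_pos
  have hdetR2 : R.det * R.det = S.det := by rw [← Matrix.det_mul, hRR]
  have hdetRne : R.det ≠ 0 := by
    intro h
    rw [h, mul_zero] at hdetR2
    exact hdetS.ne' hdetR2.symm
  have hRunit : IsUnit R.det := isUnit_iff_ne_zero.mpr hdetRne
  have habs : |R.det| = Real.sqrt S.det := by
    rw [← hdetR2, Real.sqrt_mul_self_eq_abs]
  have hSinv : S⁻¹ = R⁻¹ * R⁻¹ := by rw [← hRR, Matrix.mul_inv_rev]
  have hvm : ∀ (M : Matrix (Fin v) (Fin v) ℝ) (x : Fin v → ℝ), x ᵥ* M = Mᵀ *ᵥ x :=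
    fun M x => (Matrix.mulVec_transpose M x).symm
  -- translation
  have htrans := MeasureTheory.integral_add_right_eq_self
    (μ := (volume : Measure (Fin v → ℝ)))
    (fun y : Fin v → ℝ => mvnPdf m S y * stdCDF (α + u ⬝ᵥ y)) m
  rw [← htrans]
  -- linear change of variables
  have hGmeas : Measurable fun x : Fin v → ℝ =>
      mvnPdf m S (x + m) * stdCDF (α + u ⬝ᵥ (x + m)) := by
    have h1 : Measurable fun x : Fin v → ℝ => x + m := by fun_prop
    refine Measurable.mul ((measurable_mvnPdf m S).comp h1) ?_
    refine measurable_stdCDF.comp ?_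
    exact (((measurable_dot u).comp h1).const_add α)
  rw [integral_comp_mulVec hdetRne hGmeas]
  -- pointwise simplification
  have hpt : ∀ z : Fin v → ℝ,
      mvnPdf m S (R *ᵥ z + m) * stdCDF (α + u ⬝ᵥ (R *ᵥ z + m))
        = S.det ^ (-(1:ℝ)/2) *
          ((∏ i, stdPdf (z i)) * stdCDF ((α + u ⬝ᵥ m) + (R *ᵥ u) ⬝ᵥ z)) := by
    intro z
    have h3 : S⁻¹ *ᵥ (R *ᵥ z) = R⁻¹ *ᵥ z := by
      rw [hSinv, Matrix.mulVec_mulVec, Matrix.mul_assoc, Matrix.nonsing_inv_mul R hRunit,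
        Matrix.mul_one]
    have hquad : (R *ᵥ z + m - m) ⬝ᵥ (S⁻¹ *ᵥ (R *ᵥ z + m - m)) = z ⬝ᵥ z := by
      rw [add_sub_cancel_right, h3, Matrix.dotProduct_mulVec, hvm,
        Matrix.transpose_nonsing_inv, hRsym, Matrix.mulVec_mulVec,
        Matrix.nonsing_inv_mul R hRunit, Matrix.one_mulVec]
    have hgauss : (2 * Real.pi) ^ (-(Fintype.card (Fin v) : ℝ) / 2) *
        Real.exp (-(z ⬝ᵥ z) / 2) = ∏ i, stdPdf (z i) := by
      unfold stdPdf
      rw [Finset.prod_mul_distrib, Finset.prod_const]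
      have hcard : (Finset.univ : Finset (Fin v)).card = v := by simp
      rw [hcard]
      have h2pi : (0:ℝ) < 2 * Real.pi := by positivity
      have hpow : (2 * Real.pi) ^ (-(Fintype.card (Fin v) : ℝ) / 2)
          = (Real.sqrt (2 * Real.pi))⁻¹ ^ v := by
        rw [Real.sqrt_eq_rpow, ← Real.rpow_neg_one ((2 * Real.pi) ^ ((1:ℝ)/2)),
          ← Real.rpow_natCast (((2 * Real.pi) ^ ((1:ℝ)/2)) ^ (-1:ℝ)) v,
          ← Real.rpow_mul h2pi.le, ← Real.rpow_mul (by positivity)]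
        congr 1
        simp
        ring
      rw [hpow]
      congr 1
      rw [← Real.exp_sum]
      congr 1
      rw [show z ⬝ᵥ z = ∑ i, z i ^ 2 by simp [dotProduct, pow_two]]
      rw [neg_div, ← Finset.sum_div, Finset.sum_neg_distrib]
      simp [neg_div]
    have harg : α + u ⬝ᵥ (R *ᵥ z + m) = (α + u ⬝ᵥ m) + (R *ᵥ u) ⬝ᵥ z := by
      rw [dotProduct_add, Matrix.dotProduct_mulVec, hvm, hRsym]
      ring
    rw [harg]
    unfold mvnPdf
    rw [hquad, ← hgauss]
    ring
  rw [MeasureTheory.integral_congr_ae (Filter.Eventually.of_forall hpt),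
    MeasureTheory.integral_const_mul, lemmaP]
  have hdot : (R *ᵥ u) ⬝ᵥ (R *ᵥ u) = u ⬝ᵥ (S *ᵥ u) := by
    calc (R *ᵥ u) ⬝ᵥ (R *ᵥ u) = ((R *ᵥ u) ᵥ* R) ⬝ᵥ u := Matrix.dotProduct_mulVec _ R u
      _ = (Rᵀ *ᵥ (R *ᵥ u)) ⬝ᵥ u := by rw [hvm]
      _ = (S *ᵥ u) ⬝ᵥ u := by rw [hRsym, Matrix.mulVec_mulVec, hRR]
      _ = u ⬝ᵥ (S *ᵥ u) := dotProduct_comm _ _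
  rw [hdot, ← mul_assoc, habs]
  rw [show Real.sqrt S.det * S.det ^ (-(1:ℝ)/2) = 1 by
    rw [Real.sqrt_eq_rpow, ← Real.rpow_add hdetS]
    norm_num]
  rw [one_mul]

section MatrixAlgebra

variable {n v : ℕ} {A : Matrix (Fin n) (Fin n) ℝ} {B : Matrix (Fin n) (Fin v) ℝ}
  {D : Matrix (Fin v) (Fin v) ℝ}

lemma hBh (B : Matrix (Fin n) (Fin v) ℝ) : Bᴴ = Bᵀ :=
  Matrix.conjTranspose_eq_transpose_of_trivial B

lemma posDef_block11 (h : (Matrix.fromBlocks A B Bᵀ D).PosDef) : A.PosDef := by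
  refine Matrix.PosDef.of_dotProduct_mulVec_pos (Matrix.isHermitian_fromBlocks_iff.mp h.1).1
    fun x hx => ?_
  have hx0 : (x ⊕ᵥ (0 : Fin v → ℝ)) ≠ 0 := by
    intro hcon
    exact hx (funext fun i => congrFun hcon (Sum.inl i))
  have hp := h.dotProduct_mulVec_pos hx0
  simpa [Matrix.fromBlocks_mulVec, Sum.elim_comp_inl, Sum.elim_comp_inr,
    sumElim_dotProduct_sumElim] using hp

lemma posDef_schur (h : (Matrix.fromBlocks A B Bᵀ D).PosDef) :
    (D - Bᵀ * A⁻¹ * B).PosDef := by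
  have hA := posDef_block11 h
  haveI : Invertible A := A.invertibleOfIsUnitDet (isUnit_iff_ne_zero.mpr hA.det_pos.ne')
  have hAinvT : (A⁻¹)ᵀ = A⁻¹ := by
    rw [← Matrix.conjTranspose_eq_transpose_of_trivial]
    exact hA.1.inv
  refine Matrix.PosDef.of_dotProduct_mulVec_pos ?_ ?_
  · have hD : D.IsHermitian := (Matrix.isHermitian_fromBlocks_iff.mp h.1).2.2.2
    have hprod : (Bᵀ * A⁻¹ * B).IsHermitian := by
      show (Bᵀ * A⁻¹ * B)ᴴ = _
      rw [Matrix.conjTranspose_mul, Matrix.conjTranspose_mul]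
      simp only [hBh]
      rw [hAinvT, Matrix.transpose_transpose, ← Matrix.mul_assoc]
    exact hD.sub hprod
  · intro x hx
    have hvne : ((-((A⁻¹ * B) *ᵥ x)) ⊕ᵥ x) ≠ 0 := by
      intro hcon
      exact hx (funext fun i => congrFun hcon (Sum.inr i))
    have hp := h.dotProduct_mulVec_pos hvne
    have key := Matrix.schur_complement_eq₁₁ B D (-((A⁻¹ * B) *ᵥ x)) x hA.1
    rw [hBh] at key
    rw [Matrix.dotProduct_mulVec, key, neg_add_cancel] at hp
    simp only [star_zero, Matrix.zero_vecMul, zero_dotProduct, zero_add] at hp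
    rw [Matrix.dotProduct_mulVec]
    exact hp

lemma det_decomp (h : (Matrix.fromBlocks A B Bᵀ D).PosDef) :
    (Matrix.fromBlocks A B Bᵀ D).det = A.det * (D - Bᵀ * A⁻¹ * B).det := by
  have hA := posDef_block11 h
  haveI : Invertible A := A.invertibleOfIsUnitDet (isUnit_iff_ne_zero.mpr hA.det_pos.ne')
  rw [Matrix.det_fromBlocks₁₁, Matrix.invOf_eq_nonsing_inv]

lemma quad_decomp (h : (Matrix.fromBlocks A B Bᵀ D).PosDef) (Δ : Fin n → ℝ) (δ : Fin v → ℝ) :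
    (Δ ⊕ᵥ δ) ⬝ᵥ ((Matrix.fromBlocks A B Bᵀ D)⁻¹ *ᵥ (Δ ⊕ᵥ δ))
      = Δ ⬝ᵥ (A⁻¹ *ᵥ Δ) +
        (δ - (Bᵀ * A⁻¹) *ᵥ Δ) ⬝ᵥ ((D - Bᵀ * A⁻¹ * B)⁻¹ *ᵥ (δ - (Bᵀ * A⁻¹) *ᵥ Δ)) := by
  have hA := posDef_block11 h
  have hS := posDef_schur h
  set S : Matrix (Fin v) (Fin v) ℝ := D - Bᵀ * A⁻¹ * B with hSdef
  haveI : Invertible A := A.invertibleOfIsUnitDet (isUnit_iff_ne_zero.mpr hA.det_pos.ne')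
  haveI hSinst : Invertible S := S.invertibleOfIsUnitDet (isUnit_iff_ne_zero.mpr hS.det_pos.ne')
  haveI : Invertible (D - Bᵀ * ⅟A * B) := by
    rw [Matrix.invOf_eq_nonsing_inv]
    exact hSinst
  haveI : Invertible (Matrix.fromBlocks A B Bᵀ D) :=
    (Matrix.fromBlocks A B Bᵀ D).invertibleOfIsUnitDet
      (isUnit_iff_ne_zero.mpr h.det_pos.ne')
  have hSunit : IsUnit S.det := isUnit_iff_ne_zero.mpr hS.det_pos.ne'
  have hAinvT : (A⁻¹)ᵀ = A⁻¹ := by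
    rw [← Matrix.conjTranspose_eq_transpose_of_trivial]
    exact hA.1.inv
  have hSinvT : (S⁻¹)ᵀ = S⁻¹ := by
    rw [← Matrix.conjTranspose_eq_transpose_of_trivial]
    exact hS.1.inv
  -- the block inverse
  have hinv : (Matrix.fromBlocks A B Bᵀ D)⁻¹ =
      Matrix.fromBlocks (A⁻¹ + A⁻¹ * B * S⁻¹ * Bᵀ * A⁻¹) (-(A⁻¹ * B * S⁻¹))
        (-(S⁻¹ * Bᵀ * A⁻¹)) S⁻¹ := by
    have hi := Matrix.invOf_fromBlocks₁₁_eq A B Bᵀ D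
    simp only [Matrix.invOf_eq_nonsing_inv] at hi
    simp only [hSdef]
    exact hi
  have hQh : (-(A⁻¹ * B * S⁻¹))ᴴ = -(S⁻¹ * Bᵀ * A⁻¹) := by
    rw [Matrix.conjTranspose_neg, Matrix.conjTranspose_mul, Matrix.conjTranspose_mul]
    simp only [hBh]
    rw [hAinvT, hSinvT, ← Matrix.mul_assoc]
  haveI : Invertible (S⁻¹) := S⁻¹.invertibleOfIsUnitDet (by
    rw [Matrix.det_nonsing_inv]
    exact isUnit_ringInverse.mpr hSunit)
  have hschur := Matrix.schur_complement_eq₂₂ (A⁻¹ + A⁻¹ * B * S⁻¹ * Bᵀ * A⁻¹)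
    (-(A⁻¹ * B * S⁻¹)) (D := S⁻¹) Δ δ hS.1.inv
  rw [hQh, Matrix.nonsing_inv_nonsing_inv S hSunit] at hschur
  have h1 : S * -(S⁻¹ * Bᵀ * A⁻¹) = -(Bᵀ * A⁻¹) := by
    rw [Matrix.mul_neg, ← Matrix.mul_assoc, ← Matrix.mul_assoc,
      Matrix.mul_nonsing_inv S hSunit, Matrix.one_mul]
  have h2 : (A⁻¹ + A⁻¹ * B * S⁻¹ * Bᵀ * A⁻¹) -
      -(A⁻¹ * B * S⁻¹) * S * -(S⁻¹ * Bᵀ * A⁻¹) = A⁻¹ := by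
    simp only [Matrix.neg_mul, Matrix.mul_neg, neg_neg]
    have hmid : (A⁻¹ * B * S⁻¹) * S * (S⁻¹ * Bᵀ * A⁻¹) = A⁻¹ * B * S⁻¹ * Bᵀ * A⁻¹ := by
      rw [Matrix.mul_assoc (A⁻¹ * B) S⁻¹ S, Matrix.nonsing_inv_mul S hSunit, Matrix.mul_one]
      simp only [Matrix.mul_assoc]
    rw [hmid, add_sub_cancel_right]
  rw [h1, h2] at hschur
  simp only [star_trivial] at hschur
  rw [Matrix.neg_mulVec, neg_add_eq_sub] at hschur
  rw [Matrix.dotProduct_mulVec, hinv, hschur]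
  rw [← Matrix.dotProduct_mulVec, ← Matrix.dotProduct_mulVec, add_comm]

end MatrixAlgebra

/-- integrating the `(n+v)`-dimensional skew-normal density over the second
block gives an `n`-dimensional skew-normal density. -/
theorem skew_normal_marginalization
    {n v : ℕ}
    (Ψ11 : Matrix (Fin n) (Fin n) ℝ) (Ψ12 : Matrix (Fin n) (Fin v) ℝ)
    (Ψ22 : Matrix (Fin v) (Fin v) ℝ)
    (hΨ : (Matrix.fromBlocks Ψ11 Ψ12 Ψ12ᵀ Ψ22).PosDef)
    (ξ1 : Fin n → ℝ) (ξ2 : Fin v → ℝ) (lbar : Fin n ⊕ Fin v → ℝ)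
    (υ : Fin n ⊕ Fin v → ℝ) (hυ : υ = invSqrt hΨ *ᵥ lbar)
    (Ψ221 : Matrix (Fin v) (Fin v) ℝ) (hΨ221 : Ψ221 = Ψ22 - Ψ12ᵀ * Ψ11⁻¹ * Ψ12)
    (υtil : Fin n → ℝ)
    (hυtil : υtil = (Real.sqrt (1 + (υ ∘ Sum.inr) ⬝ᵥ (Ψ221 *ᵥ (υ ∘ Sum.inr))))⁻¹ •
      ((υ ∘ Sum.inl) + (Ψ11⁻¹ * Ψ12) *ᵥ (υ ∘ Sum.inr))) :
    ∀ y₁ : Fin n → ℝ,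
      (∫ y₂ : Fin v → ℝ,
          2 * mvnPdf (Sum.elim ξ1 ξ2) (Matrix.fromBlocks Ψ11 Ψ12 Ψ12ᵀ Ψ22) (Sum.elim y₁ y₂) *
            stdCDF (lbar ⬝ᵥ (invSqrt hΨ *ᵥ (Sum.elim y₁ y₂ - Sum.elim ξ1 ξ2)))) =
        2 * mvnPdf ξ1 Ψ11 y₁ * stdCDF (υtil ⬝ᵥ (y₁ - ξ1)) := by
  intro y₁
  have hA : Ψ11.PosDef := posDef_block11 hΨ
  have hS : (Ψ22 - Ψ12ᵀ * Ψ11⁻¹ * Ψ12).PosDef := posDef_schur hΨ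
  set S : Matrix (Fin v) (Fin v) ℝ := Ψ22 - Ψ12ᵀ * Ψ11⁻¹ * Ψ12 with hSdef
  set Δ : Fin n → ℝ := y₁ - ξ1 with hΔ
  set N : Matrix (Fin v) (Fin n) ℝ := Ψ12ᵀ * Ψ11⁻¹ with hNdef
  set m : Fin v → ℝ := ξ2 + N *ᵥ Δ with hm
  set u : Fin v → ℝ := υ ∘ Sum.inr with hu
  set α : ℝ := (υ ∘ Sum.inl) ⬝ᵥ Δ - u ⬝ᵥ ξ2 with hα
  have hAinvT : (Ψ11⁻¹)ᵀ = Ψ11⁻¹ := by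
    rw [← Matrix.conjTranspose_eq_transpose_of_trivial]
    exact hA.1.inv
  -- decomposing differences of Sum.elim vectors
  have hsub : ∀ y₂ : Fin v → ℝ, Sum.elim y₁ y₂ - Sum.elim ξ1 ξ2 = Δ ⊕ᵥ (y₂ - ξ2) := by
    intro y₂
    funext i
    cases i <;> simp [hΔ]
  -- the argument of Φ
  have hMsym : (invSqrt hΨ)ᵀ = invSqrt hΨ := by
    rw [← Matrix.conjTranspose_eq_transpose_of_trivial]
    exact (sqrtPD_isHermitian hΨ).inv
  have harg : ∀ y₂ : Fin v → ℝ,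
      lbar ⬝ᵥ (invSqrt hΨ *ᵥ (Sum.elim y₁ y₂ - Sum.elim ξ1 ξ2)) = α + u ⬝ᵥ y₂ := by
    intro y₂
    rw [hsub y₂, Matrix.dotProduct_mulVec]
    rw [show lbar ᵥ* invSqrt hΨ = υ by
      rw [← Matrix.mulVec_transpose, hMsym]
      exact hυ.symm]
    rw [show υ = (υ ∘ Sum.inl) ⊕ᵥ u from (Sum.elim_comp_inl_inr υ).symm]
    rw [sumElim_dotProduct_sumElim]
    simp only [dotProduct_sub]
    ring
  -- density factorization
  have hfac : ∀ y₂ : Fin v → ℝ,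
      mvnPdf (Sum.elim ξ1 ξ2) (Matrix.fromBlocks Ψ11 Ψ12 Ψ12ᵀ Ψ22) (Sum.elim y₁ y₂)
        = mvnPdf ξ1 Ψ11 y₁ * mvnPdf m S y₂ := by
    intro y₂
    unfold mvnPdf
    rw [hsub y₂, quad_decomp hΨ Δ (y₂ - ξ2), det_decomp hΨ]
    have hy₂m : y₂ - m = y₂ - ξ2 - N *ᵥ Δ := by
      rw [hm, sub_add_eq_sub_sub]
    rw [hy₂m]
    have hcard : ((Fintype.card (Fin n ⊕ Fin v) : ℝ)) = (n : ℝ) + v := by simp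
    have h2pi : (0:ℝ) < 2 * Real.pi := by positivity
    have hsplit : (2 * Real.pi) ^ (-(Fintype.card (Fin n ⊕ Fin v) : ℝ) / 2)
        = (2 * Real.pi) ^ (-(Fintype.card (Fin n) : ℝ) / 2) *
          (2 * Real.pi) ^ (-(Fintype.card (Fin v) : ℝ) / 2) := by
      rw [← Real.rpow_add h2pi, hcard]
      congr 1
      simp
      ring
    have hdetsplit : (Ψ11.det * S.det) ^ (-(1:ℝ)/2)
        = Ψ11.det ^ (-(1:ℝ)/2) * S.det ^ (-(1:ℝ)/2) :=
      Real.mul_rpow hA.det_pos.le hS.det_pos.le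
    have hexp : Real.exp (-(Δ ⬝ᵥ (Ψ11⁻¹ *ᵥ Δ) +
          (y₂ - ξ2 - N *ᵥ Δ) ⬝ᵥ (S⁻¹ *ᵥ (y₂ - ξ2 - N *ᵥ Δ))) / 2)
        = Real.exp (-(Δ ⬝ᵥ (Ψ11⁻¹ *ᵥ Δ)) / 2) *
          Real.exp (-((y₂ - ξ2 - N *ᵥ Δ) ⬝ᵥ (S⁻¹ *ᵥ (y₂ - ξ2 - N *ᵥ Δ))) / 2) := by
      rw [← Real.exp_add]
      congr 1
      ring
    rw [hsplit, hdetsplit, hexp]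
    ring
  -- rewrite the integrand and integrate
  have hpt : ∀ y₂ : Fin v → ℝ,
      2 * mvnPdf (Sum.elim ξ1 ξ2) (Matrix.fromBlocks Ψ11 Ψ12 Ψ12ᵀ Ψ22) (Sum.elim y₁ y₂) *
          stdCDF (lbar ⬝ᵥ (invSqrt hΨ *ᵥ (Sum.elim y₁ y₂ - Sum.elim ξ1 ξ2)))
        = (2 * mvnPdf ξ1 Ψ11 y₁) * (mvnPdf m S y₂ * stdCDF (α + u ⬝ᵥ y₂)) := by
    intro y₂
    rw [hfac y₂, harg y₂]
    ring
  rw [MeasureTheory.integral_congr_ae (Filter.Eventually.of_forall hpt),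
    MeasureTheory.integral_const_mul, lemmaB hS m u α]
  congr 1
  -- final identification of the Φ argument
  rw [hυtil, hΨ221]
  rw [smul_dotProduct, add_dotProduct]
  have hum : u ⬝ᵥ m = u ⬝ᵥ ξ2 + (Ψ11⁻¹ * Ψ12) *ᵥ u ⬝ᵥ Δ := by
    rw [hm, dotProduct_add]
    congr 1
    rw [Matrix.dotProduct_mulVec]
    rw [show u ᵥ* N = Nᵀ *ᵥ u from (Matrix.mulVec_transpose N u).symm]
    rw [hNdef, Matrix.transpose_mul, hAinvT, Matrix.transpose_transpose]
  rw [div_eq_inv_mul, hum]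
  rw [smul_eq_mul, hα]
  ring
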